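/- Let 𝔩 : 𝔗 → [0,∞) be positively homogeneous of degree one and superadditive (𝔩(v+w) ≥ 𝔩(v) + 𝔩(w)) on a convex cone 𝔗, and suppose v_0, …, v_k ∈ 𝔗 satisfy 𝔩(v_i) = 1 for all i and 𝔩(v_0 + ⋯ + v_k) ≤ k + 1 + δ. Then for all t_0, …, t_k ≥ 0 with Σ t_i = 1 one has 𝔩(Σ t_i v_i) ≤ 1 + δ. -/

import Mathlib

theorem stmt_14 (V : Type*) [AddCommGroup V] [Module ℝ V] (T : Set V)
    (hconv : Convex ℝ T) (hcone : ∀ (c : ℝ), 0 ≤ c → ∀ v ∈ T, c • v ∈ T)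
    (l : V → ℝ) (hnonneg : ∀ v ∈ T, 0 ≤ l v)
    (hhom : ∀ (c : ℝ), 0 ≤ c → ∀ v ∈ T, l (c • v) = c * l v)
    (hsuper : ∀ v ∈ T, ∀ w ∈ T, l v + l w ≤ l (v + w))
    (k : ℕ) (δ : ℝ) (hδ : 0 ≤ δ) (v : Fin (k + 1) → V)
    (hvT : ∀ i, v i ∈ T) (hl1 : ∀ i, l (v i) = 1)
    (hsum : l (∑ i, v i) ≤ (k : ℝ) + 1 + δ)
    (t : Fin (k + 1) → ℝ) (ht : ∀ i, 0 ≤ t i) (htsum : ∑ i, t i = 1) :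
    l (∑ i, t i • v i) ≤ 1 + δ := by
  have hadd : ∀ a ∈ T, ∀ b ∈ T, a + b ∈ T := by
    intro a ha b hb
    have hmem : (1/2 : ℝ) • a + (1/2 : ℝ) • b ∈ T :=
      hconv ha hb (by norm_num) (by norm_num) (by norm_num)
    have := hcone 2 (by norm_num) _ hmem
    have heq : (2 : ℝ) • ((1/2 : ℝ) • a + (1/2 : ℝ) • b) = a + b := by
      rw [smul_add, smul_smul, smul_smul]; norm_num
    rwa [heq] at this
  have h0T : (0 : V) ∈ T := by simpa using hcone 0 le_rfl (v 0) (hvT 0)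
  have hl0 : l 0 = 0 := by simpa using hhom 0 le_rfl (v 0) (hvT 0)
  have key : ∀ (s : Finset (Fin (k+1))) (f : Fin (k+1) → V), (∀ i, f i ∈ T) →
      (∑ i ∈ s, f i) ∈ T ∧ ∑ i ∈ s, l (f i) ≤ l (∑ i ∈ s, f i) := by
    intro s f hf
    induction s using Finset.induction with
    | empty => simpa [hl0] using h0T
    | insert a s hnot ih =>
      rw [Finset.sum_insert hnot, Finset.sum_insert hnot]
      refine ⟨hadd _ (hf a) _ ih.1, ?_⟩
      calc l (f a) + ∑ i ∈ s, l (f i) ≤ l (f a) + l (∑ i ∈ s, f i) := by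
            linarith [ih.2]
        _ ≤ l (f a + ∑ i ∈ s, f i) := hsuper _ (hf a) _ ih.1
  have htle : ∀ i, t i ≤ 1 := by
    intro i
    rw [← htsum]
    exact Finset.single_le_sum (fun j _ => ht j) (Finset.mem_univ i)
  -- members
  have h1 : (∑ i, t i • v i) ∈ T := (key _ _ (fun i => hcone _ (ht i) _ (hvT i))).1
  have h2 : (∑ i, (1 - t i) • v i) ∈ T :=
    (key _ _ (fun i => hcone _ (by linarith [htle i]) _ (hvT i))).1
  have hsplit : (∑ i, v i) = (∑ i, t i • v i) + ∑ i, (1 - t i) • v i := by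
    rw [← Finset.sum_add_distrib]
    congr 1; funext i
    rw [← add_smul]; simp
  have hlower : l (∑ i, (1 - t i) • v i) ≥ (k : ℝ) := by
    have := (key Finset.univ (fun i => (1 - t i) • v i)
      (fun i => hcone _ (by linarith [htle i]) _ (hvT i))).2
    have hval : ∑ i, l ((1 - t i) • v i) = (k : ℝ) := by
      have : ∀ i, l ((1 - t i) • v i) = 1 - t i := by
        intro i
        rw [hhom _ (by linarith [htle i]) _ (hvT i), hl1 i, mul_one]
      rw [Finset.sum_congr rfl (fun i _ => this i), Finset.sum_sub_distrib, htsum]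
      simp
    linarith
  have := hsuper _ h1 _ h2
  rw [← hsplit] at this
  linarith
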